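/- Let Q, Q̃, Q₀ be quadratic forms with associated bilinear forms, and let λ̃ > 0 satisfy λ̃Q₀(v) ≤ Q̃(v) for all test functions v. Suppose there exist k, k' > 0 and δ ≥ 0 such that for all n and all test functions u: Q(ω_n u) ≤ k·Q(u, ω_n² u) + k'‖u‖², |Q̃(ω_n u) − Q(ω_n u)| ≤ δ·Q₀(ω_n u), and |Q̃(u, ω_n²u) − Q(u, ω_n²u)| ≤ cδ·Q₀(ω_n u) for some c > 0. If δ(1 + ck) < λ̃, then Q̃(ω_n u) ≤ [k/(1 − λ̃^{−1}(1+ck)δ)]·Q̃(u, ω_n² u) + k̃'‖u‖² for some constant k̃' (one may take k̃' = k'/(1 − λ̃^{−1}(1+ck)δ)). -/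

import Mathlib

theorem stmt_9 (V : Type*) (norm2 : V → ℝ)
    -- `QA n u` stands for `Q(ω_n u)`, `QB n u` for `Q(u, ω_n² u)`,
    -- `QA' n u` for `Q̃(ω_n u)`, `QB' n u` for `Q̃(u, ω_n² u)`,
    -- and `Q0 n u` for `Q₀(ω_n u)`.
    (QA QB QA' QB' Q0 : ℕ → V → ℝ)
    (lam' : ℝ) (hlam' : 0 < lam')
    (hQ0nonneg : ∀ n u, 0 ≤ Q0 n u)
    (hcoercive : ∀ n u, lam' * Q0 n u ≤ QA' n u)
    (k k' : ℝ) (hk : 0 < k) (hk' : 0 < k') (δ : ℝ) (hδ : 0 ≤ δ) (c : ℝ) (hc : 0 < c)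
    (hP : ∀ n u, QA n u ≤ k * QB n u + k' * norm2 u)
    (hpert : ∀ n u, |QA' n u - QA n u| ≤ δ * Q0 n u)
    (hpert' : ∀ n u, |QB' n u - QB n u| ≤ c * δ * Q0 n u)
    (hsmall : δ * (1 + c * k) < lam') :
    ∀ n u, QA' n u ≤ (k / (1 - lam'⁻¹ * (1 + c * k) * δ)) * QB' n u +
      (k' / (1 - lam'⁻¹ * (1 + c * k) * δ)) * norm2 u := by
  intro n u
  have h0 := hQ0nonneg n u
  have h1 := hcoercive n u
  have h2 := hP n u
  have h3 := (abs_le.mp (hpert n u)).2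
  have h4 := (abs_le.mp (hpert' n u)).1
  set ε := 1 - lam'⁻¹ * (1 + c * k) * δ with hεdef
  clear_value ε
  have hinv : 0 < lam'⁻¹ := inv_pos.mpr hlam'
  have hone : lam' * lam'⁻¹ = 1 := mul_inv_cancel₀ hlam'.ne'
  have hε : 0 < ε := by
    have : lam'⁻¹ * (1 + c * k) * δ < 1 := by nlinarith
    linarith
  have hQ0 : Q0 n u ≤ lam'⁻¹ * QA' n u := by
    rw [← div_eq_inv_mul, le_div_iff₀ hlam']
    linarith [mul_comm (Q0 n u) lam']
  have key : ε * QA' n u ≤ k * QB' n u + k' * norm2 u := by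
    have hchain : QA' n u ≤ k * QB' n u + k' * norm2 u + (1 + c * k) * δ * Q0 n u := by
      nlinarith
    have hm := mul_le_mul_of_nonneg_left hQ0 (by positivity : (0:ℝ) ≤ (1 + c * k) * δ)
    have heq : (1 + c * k) * δ * (lam'⁻¹ * QA' n u) = lam'⁻¹ * (1 + c * k) * δ * QA' n u := by ring
    have hεq : ε * QA' n u = QA' n u - lam'⁻¹ * (1 + c * k) * δ * QA' n u := by
      rw [hεdef]; ring
    linarith
  rw [div_mul_eq_mul_div, div_mul_eq_mul_div, ← add_div, le_div_iff₀ hε]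
  linarith [mul_comm (QA' n u) ε]
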